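/- Let d ∈ ℕ*. The inverse of the homeomorphism F : ℝ^d → B_d(0,1), F(y) = y/√(1 + ‖y‖²), is given by F⁻¹(y) = y/√(1 − ‖y‖²) for y ∈ B_d(0,1). For every δ ∈ (0,1) and every γ > 0, the restriction of F⁻¹ to B_d(0,δ), together with its successive derivatives, is Lip-γ on B_d(0,δ); equivalently, for every n ∈ ℕ and 0 < ε ≤ 1, all iterated derivatives of F⁻¹ up to order n are bounded on B_d(0,δ) and the n-th derivative is ε-Hölder on B_d(0,δ). -/

import Mathlib

set_option maxHeartbeats 1000000


open Metric Set

noncomputable section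

/-- The Taylor remainder of order `k` associated to the collection
`f = (f⁰, f¹, …, fⁿ)` (each `fᵏ` viewed as a continuous `k`-linear map),
evaluated at the elementary tensor `v₁ ⊗ ⋯ ⊗ v_k`:
`Rₖ(x,y)(v) = fᵏ(x)(v) - ∑_{j=k}^{n} fʲ(y)(v ⊗ (x-y)^{⊗(j-k)}/(j-k)!)`. -/
def lipRemainder {E F : Type*} [NormedAddCommGroup E] [NormedSpace ℝ E]
    [NormedAddCommGroup F] [NormedSpace ℝ F]
    (n : ℕ) (f : ∀ k : ℕ, E → ContinuousMultilinearMap ℝ (fun _ : Fin k => E) F)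
    (k : ℕ) (x y : E) (v : Fin k → E) : F :=
  f k x v - ∑ j ∈ Finset.range (n - k + 1),
    ((j.factorial : ℝ)⁻¹) • f (k + j) y (Fin.append v fun _ : Fin j => x - y)

/-- The collection `(f^{k₀}, …, fⁿ)` satisfies the `Lip-γ` bounds with constant `M`
on `U`: each `fᵏ` is bounded by `M` (as a multilinear map) and each remainder of
order `k` is bounded by `M ‖x-y‖^{γ-k}` (times the norm of the tensor).
Taking `k₀ = 0` gives the usual notion of a `Lip-γ` collection; taking `k₀ = 1`
expresses that the shifted collection `(f¹, …, fⁿ)` is `Lip-(γ-1)`. -/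
def IsLipCollBetween {E F : Type*} [NormedAddCommGroup E] [NormedSpace ℝ E]
    [NormedAddCommGroup F] [NormedSpace ℝ F]
    (γ : ℝ) (k₀ n : ℕ) (M : ℝ)
    (f : ∀ k : ℕ, E → ContinuousMultilinearMap ℝ (fun _ : Fin k => E) F)
    (U : Set E) : Prop :=
  (∀ k, k₀ ≤ k → k ≤ n → ∀ x ∈ U, ∀ v : Fin k → E,
      ‖f k x v‖ ≤ M * ∏ i, ‖v i‖) ∧
  (∀ k, k₀ ≤ k → k ≤ n → ∀ x ∈ U, ∀ y ∈ U, ∀ v : Fin k → E,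
      ‖lipRemainder n f k x y v‖ ≤ M * ‖x - y‖ ^ (γ - k) * ∏ i, ‖v i‖)

/-- Each member of the collection takes values in the symmetric multilinear maps. -/
def IsSymmColl {E F : Type*} [NormedAddCommGroup E] [NormedSpace ℝ E]
    [NormedAddCommGroup F] [NormedSpace ℝ F]
    (n : ℕ)
    (f : ∀ k : ℕ, E → ContinuousMultilinearMap ℝ (fun _ : Fin k => E) F)
    (U : Set E) : Prop :=
  ∀ k, k ≤ n → ∀ x ∈ U, ∀ (σ : Equiv.Perm (Fin k)) (v : Fin k → E),
    f k x (v ∘ σ) = f k x v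
/-- The map `F(y) = y / √(1 + ‖y‖²)` from `ℝ^d` to the open Euclidean unit ball. -/
def ballMap (d : ℕ) (y : EuclideanSpace ℝ (Fin d)) : EuclideanSpace ℝ (Fin d) :=
  (Real.sqrt (1 + ‖y‖ ^ 2))⁻¹ • y

/-- The candidate inverse `y ↦ y / √(1 - ‖y‖²)`, defined on the open unit ball. -/
def ballMapInv (d : ℕ) (y : EuclideanSpace ℝ (Fin d)) : EuclideanSpace ℝ (Fin d) :=
  (Real.sqrt (1 - ‖y‖ ^ 2))⁻¹ • y

namespace LipHelper

variable {E F : Type*} [NormedAddCommGroup E] [NormedSpace ℝ E]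
  [NormedAddCommGroup F] [NormedSpace ℝ F]
variable {s : Set E} {f : E → F}

theorem contDiffOn_iter (hs : IsOpen s) (hf : ContDiffOn ℝ (⊤ : ℕ∞) f s) (K : ℕ)
    (m : ℕ∞) : ContDiffOn ℝ m (iteratedFDerivWithin ℝ K f s) s := fun x hx =>
  ContDiffWithinAt.iteratedFDerivWithin_right (hf x hx) hs.uniqueDiffOn (by exact_mod_cast le_top) hx

theorem diffOn_iter (hs : IsOpen s) (hf : ContDiffOn ℝ (⊤ : ℕ∞) f s) (K : ℕ) :
    DifferentiableOn ℝ (iteratedFDerivWithin ℝ K f s) s :=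
  (contDiffOn_iter hs hf K 1).differentiableOn one_ne_zero

theorem iter_cast {K K' : ℕ} (e : K = K') (x : E) (w : Fin K' → E) :
    iteratedFDerivWithin ℝ K f s x (w ∘ Fin.cast e) = iteratedFDerivWithin ℝ K' f s x w := by
  subst e; rfl

theorem lem_swap01 (hs : IsOpen s) (hf : ContDiffOn ℝ (⊤ : ℕ∞) f s) (K : ℕ) {x : E}
    (hx : x ∈ s) (m : Fin (K + 2) → E) :
    iteratedFDerivWithin ℝ (K + 2) f s x (m ∘ Equiv.swap 0 1) =
      iteratedFDerivWithin ℝ (K + 2) f s x m := by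
  have key : ∀ m : Fin (K + 2) → E,
      iteratedFDerivWithin ℝ (K + 2) f s x m =
        fderivWithin ℝ (fderivWithin ℝ (iteratedFDerivWithin ℝ K f s) s) s x (m 0) (m 1)
          (Fin.tail (Fin.tail m)) := by
    intro m
    rw [iteratedFDerivWithin_succ_apply_left]
    have h1 : iteratedFDerivWithin ℝ (K + 1) f s =
        (continuousMultilinearCurryLeftEquiv ℝ (fun _ : Fin (K + 1) => E) F).symm ∘
          fderivWithin ℝ (iteratedFDerivWithin ℝ K f s) s := iteratedFDerivWithin_succ_eq_comp_left
    have hd2 : HasFDerivWithinAt (fderivWithin ℝ (iteratedFDerivWithin ℝ K f s) s)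
        (fderivWithin ℝ (fderivWithin ℝ (iteratedFDerivWithin ℝ K f s) s) s x) s x := by
      have : DifferentiableOn ℝ (fderivWithin ℝ (iteratedFDerivWithin ℝ K f s) s) s :=
        ((contDiffOn_iter hs hf K 2).fderivWithin hs.uniqueDiffOn le_rfl).differentiableOn one_ne_zero
      exact (this x hx).hasFDerivWithinAt
    set ψ := ((continuousMultilinearCurryLeftEquiv ℝ (fun _ : Fin (K + 1) => E)
        F).symm.toContinuousLinearEquiv :
      (E →L[ℝ] ContinuousMultilinearMap ℝ (fun _ : Fin K => E) F) →L[ℝ]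
        ContinuousMultilinearMap ℝ (fun _ : Fin (K + 1) => E) F) with hψ
    have hcomp : HasFDerivWithinAt (iteratedFDerivWithin ℝ (K + 1) f s)
        (ψ.comp (fderivWithin ℝ (fderivWithin ℝ (iteratedFDerivWithin ℝ K f s) s) s x)) s x := by
      rw [h1]
      exact ψ.hasFDerivAt.comp_hasFDerivWithinAt x ((((contDiffOn_iter hs hf K 2).fderivWithin hs.uniqueDiffOn le_rfl).differentiableOn one_ne_zero) x hx).hasFDerivWithinAt
    rw [hcomp.fderivWithin (hs.uniqueDiffOn x hx)]
    simp [ψ, Fin.tail]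
    rfl
  rw [key, key]
  have hcd : ContDiffWithinAt ℝ 2 (iteratedFDerivWithin ℝ K f s) s x :=
    (contDiffOn_iter hs hf K 2) x hx
  have hsymm : IsSymmSndFDerivWithinAt ℝ (iteratedFDerivWithin ℝ K f s) s x :=
    hcd.isSymmSndFDerivWithinAt (by simp) hs.uniqueDiffOn
      (by rw [hs.interior_eq]; exact subset_closure hx) hx
  have h0 : (m ∘ Equiv.swap 0 1) 0 = m 1 := by simp
  have h1 : (m ∘ Equiv.swap 0 1) 1 = m 0 := by simp
  have h2 : Fin.tail (Fin.tail (m ∘ Equiv.swap 0 1)) = Fin.tail (Fin.tail m) := by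
    funext i
    show m (Equiv.swap 0 1 i.succ.succ) = m i.succ.succ
    rw [Equiv.swap_apply_of_ne_of_ne (Fin.succ_ne_zero _)]
    intro h
    have h' : i.succ.succ = (0 : Fin (K + 1)).succ := by rw [h]; rfl
    exact Fin.succ_ne_zero _ (Fin.succ_injective _ h')
  rw [h0, h1, h2, hsymm.eq]

theorem succ_swap {N : ℕ} (a b q : Fin N) :
    Equiv.swap a.succ b.succ q.succ = (Equiv.swap a b q).succ := by
  rcases eq_or_ne q a with rfl | ha
  · simp
  rcases eq_or_ne q b with rfl | hb
  · simp
  rw [Equiv.swap_apply_of_ne_of_ne ((Fin.succ_injective _).ne ha)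
    ((Fin.succ_injective _).ne hb), Equiv.swap_apply_of_ne_of_ne ha hb]

theorem fderiv_precomp (hs : IsOpen s) (hf : ContDiffOn ℝ (⊤ : ℕ∞) f s) {K : ℕ}
    (τ : Equiv.Perm (Fin K))
    (hinv : ∀ w ∈ s, ∀ u : Fin K → E,
      iteratedFDerivWithin ℝ K f s w (u ∘ τ) = iteratedFDerivWithin ℝ K f s w u)
    {x : E} (hx : x ∈ s) (a : E) (u : Fin K → E) :
    fderivWithin ℝ (iteratedFDerivWithin ℝ K f s) s x a (u ∘ τ) =
      fderivWithin ℝ (iteratedFDerivWithin ℝ K f s) s x a u := by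
  set Φ := ContinuousMultilinearMap.domDomCongrₗᵢ ℝ E F τ with hΦ
  have hEqOn : Set.EqOn (⇑Φ ∘ iteratedFDerivWithin ℝ K f s) (iteratedFDerivWithin ℝ K f s) s := by
    intro w hw
    ext u'
    exact hinv w hw u'
  set ΦL := (Φ.toContinuousLinearEquiv :
      ContinuousMultilinearMap ℝ (fun _ : Fin K => E) F →L[ℝ]
        ContinuousMultilinearMap ℝ (fun _ : Fin K => E) F) with hΦL
  have e1 : fderivWithin ℝ (⇑ΦL ∘ iteratedFDerivWithin ℝ K f s) s x =
      fderivWithin ℝ (iteratedFDerivWithin ℝ K f s) s x :=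
    fderivWithin_congr hEqOn (hEqOn hx)
  have e2 : fderivWithin ℝ (⇑ΦL ∘ iteratedFDerivWithin ℝ K f s) s x =
      ΦL.comp (fderivWithin ℝ (iteratedFDerivWithin ℝ K f s) s x) := by
    have hd : HasFDerivWithinAt (iteratedFDerivWithin ℝ K f s)
        (fderivWithin ℝ (iteratedFDerivWithin ℝ K f s) s x) s x :=
      (diffOn_iter hs hf K x hx).hasFDerivWithinAt
    exact (ΦL.hasFDerivAt.comp_hasFDerivWithinAt x hd).fderivWithin (hs.uniqueDiffOn x hx)
  have : ΦL (fderivWithin ℝ (iteratedFDerivWithin ℝ K f s) s x a) u =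
      fderivWithin ℝ (iteratedFDerivWithin ℝ K f s) s x a u := by
    have := congrArg (fun (L : E →L[ℝ] ContinuousMultilinearMap ℝ (fun _ : Fin K => E) F) =>
      L a u) (e2.symm.trans e1)
    simpa using this
  exact this

theorem lem_swap_adj (hs : IsOpen s) (hf : ContDiffOn ℝ (⊤ : ℕ∞) f s) :
    ∀ (i K : ℕ) (p q : Fin K), (p : ℕ) = i → (q : ℕ) = i + 1 → ∀ {x : E}, x ∈ s →
      ∀ m : Fin K → E,
        iteratedFDerivWithin ℝ K f s x (m ∘ Equiv.swap p q) =
          iteratedFDerivWithin ℝ K f s x m := by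
  intro i
  induction i with
  | zero =>
    intro K p q hp hq x hx m
    obtain ⟨K', rfl⟩ : ∃ K', K = K' + 2 := ⟨K - 2, by omega⟩
    have hp0 : p = 0 := by apply Fin.ext; simp [hp]
    have hq1 : q = 1 := by apply Fin.ext; simp [hq]
    rw [hp0, hq1]
    exact lem_swap01 hs hf K' hx m
  | succ i IH =>
    intro K p q hp hq x hx m
    obtain ⟨K'', rfl⟩ : ∃ K'', K = K'' + 1 := ⟨K - 1, by omega⟩
    have hq' : (q : ℕ) < K'' + 1 := q.2
    have hiK : i + 1 < K'' := by omega
    set p' : Fin K'' := ⟨i, by omega⟩ with hp'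
    set q' : Fin K'' := ⟨i + 1, by omega⟩ with hq''
    have hps : p = p'.succ := by apply Fin.ext; simp [hp, hp']
    have hqs : q = q'.succ := by apply Fin.ext; simp [hq, hq'']
    have h0 : (m ∘ Equiv.swap p q) 0 = m 0 := by
      show m (Equiv.swap p q 0) = m 0
      rw [Equiv.swap_apply_of_ne_of_ne (Fin.ne_of_val_ne (by simp [hp]))
        (Fin.ne_of_val_ne (by simp [hq]))]
    have htail : Fin.tail (m ∘ Equiv.swap p q) = Fin.tail m ∘ Equiv.swap p' q' := by
      funext j
      show m (Equiv.swap p q j.succ) = m (Equiv.swap p' q' j).succ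
      rw [hps, hqs, succ_swap]
    rw [iteratedFDerivWithin_succ_apply_left, iteratedFDerivWithin_succ_apply_left, h0, htail]
    exact fderiv_precomp hs hf (Equiv.swap p' q')
      (fun w hw u => IH K'' p' q' rfl rfl hw u) hx (m 0) (Fin.tail m)

theorem lem_swap_any (hs : IsOpen s) (hf : ContDiffOn ℝ (⊤ : ℕ∞) f s) :
    ∀ (Dd K : ℕ) (p q : Fin K), (q : ℕ) = (p : ℕ) + Dd + 1 → ∀ {x : E}, x ∈ s →
      ∀ m : Fin K → E,
        iteratedFDerivWithin ℝ K f s x (m ∘ Equiv.swap p q) =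
          iteratedFDerivWithin ℝ K f s x m := by
  intro Dd
  induction Dd with
  | zero =>
    intro K p q hpq x hx m
    exact lem_swap_adj hs hf (p : ℕ) K p q rfl (by omega) hx m
  | succ Dd IH =>
    intro K p q hpq x hx m
    have hqK : (q : ℕ) < K := q.2
    set r : Fin K := ⟨(p : ℕ) + Dd + 1, by omega⟩ with hr
    have hpr : p ≠ r := by
      intro h; have : (p : ℕ) = (r : ℕ) := by rw [h]
      simp [hr] at this; omega
    have hrq : r ≠ q := by
      intro h; have : (r : ℕ) = (q : ℕ) := by rw [h]
      simp [hr] at this; omega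
    have hpq' : p ≠ q := by
      intro h; have : (p : ℕ) = (q : ℕ) := by rw [h]
      omega
    have hcomp : m ∘ Equiv.swap p q = (((m ∘ Equiv.swap r q) ∘ Equiv.swap p r) ∘ Equiv.swap r q) := by
      funext a
      show m (Equiv.swap p q a) = m (Equiv.swap r q (Equiv.swap p r (Equiv.swap r q a)))
      congr 1
      rcases eq_or_ne a p with rfl | hap
      · have h1 : Equiv.swap r q a = a := Equiv.swap_apply_of_ne_of_ne hpr hpq'
        have h2 : Equiv.swap a r a = r := Equiv.swap_apply_left _ _
        have h3 : Equiv.swap r q r = q := Equiv.swap_apply_left _ _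
        rw [Equiv.swap_apply_left, h1, h2, h3]
      rcases eq_or_ne a q with rfl | haq
      · have h1 : Equiv.swap r a a = r := Equiv.swap_apply_right _ _
        have h2 : Equiv.swap p r r = p := Equiv.swap_apply_right _ _
        have h3 : Equiv.swap r a p = p := Equiv.swap_apply_of_ne_of_ne hpr hpq'
        rw [Equiv.swap_apply_right, h1, h2, h3]
      rcases eq_or_ne a r with har | har
      · rw [har]
        have h0 : Equiv.swap p q r = r := Equiv.swap_apply_of_ne_of_ne (Ne.symm hpr) hrq
        have h1 : Equiv.swap r q r = q := Equiv.swap_apply_left _ _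
        have h2 : Equiv.swap p r q = q := Equiv.swap_apply_of_ne_of_ne (Ne.symm hpq') (Ne.symm hrq)
        have h3 : Equiv.swap r q q = r := Equiv.swap_apply_right _ _
        rw [h0, h1, h2, h3]
      · have h0 : Equiv.swap p q a = a := Equiv.swap_apply_of_ne_of_ne hap haq
        have h1 : Equiv.swap r q a = a := Equiv.swap_apply_of_ne_of_ne har haq
        have h2 : Equiv.swap p r a = a := Equiv.swap_apply_of_ne_of_ne hap har
        rw [h0, h1, h2, h1]
    rw [hcomp]
    rw [lem_swap_adj hs hf (r : ℕ) K r q rfl (by simp [hr]; omega) hx]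
    rw [IH K p r (by simp [hr]) hx]
    rw [lem_swap_adj hs hf (r : ℕ) K r q rfl (by simp [hr]; omega) hx]

theorem lem_perm (hs : IsOpen s) (hf : ContDiffOn ℝ (⊤ : ℕ∞) f s) (K : ℕ)
    (σ : Equiv.Perm (Fin K)) :
    ∀ x ∈ s, ∀ m : Fin K → E,
      iteratedFDerivWithin ℝ K f s x (m ∘ σ) = iteratedFDerivWithin ℝ K f s x m := by
  refine Equiv.Perm.swap_induction_on σ ?_ ?_
  · intro x hx m; rfl
  · intro g a b hab IH x hx m
    have hcomp : m ∘ ⇑(Equiv.swap a b * g) = (m ∘ ⇑(Equiv.swap a b)) ∘ ⇑g := rfl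
    rw [hcomp, IH x hx]
    rcases lt_or_gt_of_ne hab with h | h
    · exact lem_swap_any hs hf ((b : ℕ) - (a : ℕ) - 1) K a b
        (by rw [Fin.lt_def] at h; omega) hx m
    · rw [Equiv.swap_comm]
      exact lem_swap_any hs hf ((a : ℕ) - (b : ℕ) - 1) K b a
        (by rw [Fin.lt_def] at h; omega) hx m


theorem append_val_lt {G : Type*} {a b : ℕ} (u : Fin a → G) (w : Fin b → G) (q : Fin (a + b))
    (hq : (q : ℕ) < a) : Fin.append u w q = u ⟨q, hq⟩ := by
  revert hq
  induction q using Fin.addCases with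
  | left i => intro hq; rw [Fin.append_left]; exact congrArg u (Fin.ext rfl)
  | right i => intro hq; exact absurd hq (by simp)

theorem append_val_ge {G : Type*} {a b : ℕ} (u : Fin a → G) (w : Fin b → G) (q : Fin (a + b))
    (hq : a ≤ (q : ℕ)) : Fin.append u w q = w ⟨(q : ℕ) - a, by have := q.2; omega⟩ := by
  revert hq
  induction q using Fin.addCases with
  | left i => intro hq; exact absurd hq (by simp)
  | right i => intro hq; rw [Fin.append_right]; exact congrArg w (Fin.ext (by simp))

/-- The auxiliary Taylor remainder. -/
def auxRem (f : E → F) (s : Set E) (n k : ℕ) (x y : E) (v : Fin k → E) : F :=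
  iteratedFDerivWithin ℝ k f s x v - ∑ j ∈ Finset.range (n + 1 - k),
    ((j.factorial : ℝ)⁻¹) • iteratedFDerivWithin ℝ (k + j) f s y
      (Fin.append v fun _ : Fin j => x - y)

theorem auxRem_self {n k : ℕ} (hk : k ≤ n) (y : E) (v : Fin k → E) :
    auxRem f s n k y y v = 0 := by
  have h : n + 1 - k = (n - k) + 1 := by omega
  rw [auxRem, h, Finset.sum_range_succ']
  have h0 : ∀ j : ℕ, iteratedFDerivWithin ℝ (k + (j + 1)) f s y
      (Fin.append v fun _ : Fin (j + 1) => y - y) = 0 := by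
    intro j
    apply ContinuousMultilinearMap.map_coord_zero _ (Fin.natAdd k (0 : Fin (j + 1)))
    rw [Fin.append_right]
    simp
  have h1 : (Fin.append v fun _ : Fin 0 => y - y) = v := by
    funext i
    exact append_val_lt v _ i i.2
  simp only [h0, smul_zero, Finset.sum_const_zero, zero_add, h1, Nat.factorial_zero,
    Nat.cast_one, inv_one, one_smul]
  exact sub_self _

theorem shift_slot (hs : IsOpen s) (hf : ContDiffOn ℝ (⊤ : ℕ∞) f s) {k j' : ℕ}
    {y : E} (hy : y ∈ s) (v : Fin k → E) (c h : E) (i : Fin (j' + 1)) :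
    iteratedFDerivWithin ℝ (k + (j' + 1)) f s y
      (Function.update (Fin.append v fun _ : Fin (j' + 1) => c) (Fin.natAdd k i) h) =
    iteratedFDerivWithin ℝ (k + 1 + j') f s y
      (Fin.append (Fin.cons h v) fun _ : Fin j' => c) := by
  have e : k + (j' + 1) = k + 1 + j' := by omega
  set T : Fin (k + 1 + j') → E := Fin.append (Fin.cons h v) (fun _ : Fin j' => c) with hT
  set p : Fin (k + j' + 1) := ⟨k + (i : ℕ), by omega⟩ with hp
  have hiv : (i : ℕ) ≤ j' := by have := i.2; omega
  have hpe : Fin.natAdd k i = p := Fin.ext rfl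
  -- evaluation of T by value of index
  have hT0 : ∀ r : Fin (k + 1 + j'), (r : ℕ) = 0 → T r = h := by
    intro r hr
    rw [hT, append_val_lt _ _ _ (by omega : (r : ℕ) < k + 1)]
    have : (⟨(r : ℕ), by omega⟩ : Fin (k + 1)) = 0 := Fin.ext (by simp [hr])
    rw [this, Fin.cons_zero]
  have hTmid : ∀ (r : Fin (k + 1 + j')) (h1 : 0 < (r : ℕ)) (h2 : (r : ℕ) < k + 1),
      T r = v ⟨(r : ℕ) - 1, by omega⟩ := by
    intro r h1 h2
    rw [hT, append_val_lt _ _ _ h2]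
    have : (⟨(r : ℕ), h2⟩ : Fin (k + 1)) = Fin.succ ⟨(r : ℕ) - 1, by omega⟩ :=
      Fin.ext (by simp; omega)
    rw [this, Fin.cons_succ]
  have hThigh : ∀ r : Fin (k + 1 + j'), k + 1 ≤ (r : ℕ) → T r = c := by
    intro r hr
    rw [hT, append_val_ge _ _ _ hr]
  have hS : Function.update (Fin.append v fun _ : Fin (j' + 1) => c) (Fin.natAdd k i) h =
      (T ∘ Fin.cast e) ∘ Fin.cycleRange p := by
    rw [hpe]
    funext q
    show _ = T (Fin.cast e (Fin.cycleRange p q))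
    rcases lt_trichotomy q p with hlt | heq | hgt
    · have hcr : ((Fin.cycleRange p q : Fin (k + j' + 1)) : ℕ) = (q : ℕ) + 1 :=
        Fin.coe_cycleRange_of_lt hlt
      have hqp : (q : ℕ) < (p : ℕ) := hlt
      have hpv : (p : ℕ) = k + (i : ℕ) := rfl
      rw [Function.update_of_ne (ne_of_lt hlt)]
      rcases lt_or_ge ((q : ℕ)) k with hk1 | hk1
      · rw [append_val_lt v _ q hk1]
        have hm := hTmid (Fin.cast e (Fin.cycleRange p q)) (by simp [hcr])
          (by simp [hcr]; omega)
        rw [hm]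
        congr 1
        exact Fin.ext (by simp [hcr])
      · rw [append_val_ge v _ q hk1]
        rw [hThigh _ (by simp [hcr]; omega)]
    · have hcrs : Fin.cycleRange p p = 0 := Fin.cycleRange_self p
      rw [heq, Function.update_self, hcrs]
      exact (hT0 _ (by simp)).symm
    · have hcrg : Fin.cycleRange p q = q := Fin.cycleRange_of_gt hgt
      have hpv : (p : ℕ) = k + (i : ℕ) := rfl
      have hqv : k ≤ (q : ℕ) := by
        have : (p : ℕ) < (q : ℕ) := hgt
        omega
      rw [hcrg, Function.update_of_ne (ne_of_gt hgt)]
      rw [append_val_ge v _ q hqv]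
      rw [hThigh _ (by
        have : (p : ℕ) < (q : ℕ) := hgt
        simp; omega)]
  rw [hS]
  exact (lem_perm hs hf (k + (j' + 1)) (Fin.cycleRange p) y hy
    (T ∘ Fin.cast e)).trans (iter_cast e y T)

theorem auxRem_hasFDeriv [CompleteSpace F] (hs : IsOpen s) (hf : ContDiffOn ℝ (⊤ : ℕ∞) f s)
    {n k : ℕ} (hk : k ≤ n) {y : E} (hy : y ∈ s) (v : Fin k → E) {z : E} (hz : z ∈ s) :
    ∃ D : E →L[ℝ] F, HasFDerivWithinAt (fun x => auxRem f s n k x y v) D s z ∧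
      ∀ h : E, D h = auxRem f s n (k + 1) z y (Fin.cons h v) := by
  classical
  -- first term
  have hgk : DifferentiableWithinAt ℝ (iteratedFDerivWithin ℝ k f s) s z :=
    diffOn_iter hs hf k z hz
  set D1 : E →L[ℝ] F := (ContinuousMultilinearMap.apply ℝ (fun _ : Fin k => E) F v).comp
    (fderivWithin ℝ (iteratedFDerivWithin ℝ k f s) s z) with hD1
  have hT1 : HasFDerivWithinAt (fun x => iteratedFDerivWithin ℝ k f s x v) D1 s z :=
    (ContinuousMultilinearMap.apply ℝ (fun _ : Fin k => E) F v).hasFDerivAt.comp_hasFDerivWithinAt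
      z hgk.hasFDerivWithinAt
  -- the affine maps and their derivatives
  set L : ∀ j : ℕ, E →L[ℝ] (Fin (k + j) → E) := fun j => ContinuousLinearMap.pi
    (fun i : Fin (k + j) => Fin.addCases (fun _ => (0 : E →L[ℝ] E))
      (fun _ => ContinuousLinearMap.id ℝ E) i) with hL
  have hL0 : ∀ (j : ℕ) (h : E) (i : Fin k), L j h (Fin.castAdd j i) = 0 := by
    intro j h i
    simp only [hL, ContinuousLinearMap.pi_apply, Fin.addCases_left,
      ContinuousLinearMap.zero_apply]
  have hL1 : ∀ (j : ℕ) (h : E) (i : Fin j), L j h (Fin.natAdd k i) = h := by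
    intro j h i
    simp only [hL, ContinuousLinearMap.pi_apply, Fin.addCases_right,
      ContinuousLinearMap.id_apply]
  set ψ : ∀ j : ℕ, E → (Fin (k + j) → E) :=
    fun j x => Fin.append v (fun _ : Fin j => x - y) with hψ
  have hψd : ∀ j, HasFDerivAt (ψ j) (L j) z := by
    intro j
    apply hasFDerivAt_pi.2
    intro i
    induction i using Fin.addCases with
    | left i =>
      have hfun : (fun x : E => ψ j x (Fin.castAdd j i)) = fun _ => v i := by
        funext x
        simp only [hψ, Fin.append_left]
      rw [hfun, Fin.addCases_left]
      exact hasFDerivAt_const _ _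
    | right i =>
      have hfun : (fun x : E => ψ j x (Fin.natAdd k i)) = fun x => x - y := by
        funext x
        simp only [hψ, Fin.append_right]
      rw [hfun, Fin.addCases_right]
      exact (hasFDerivAt_id z).sub_const y
  have hAd : ∀ j : ℕ, HasFDerivAt (fun x => iteratedFDerivWithin ℝ (k + j) f s y (ψ j x))
      (((iteratedFDerivWithin ℝ (k + j) f s y).linearDeriv (ψ j z)).comp (L j)) z := fun j =>
    ((iteratedFDerivWithin ℝ (k + j) f s y).hasFDerivAt (ψ j z)).comp z (hψd j)
  set D : E →L[ℝ] F := D1 - ∑ j ∈ Finset.range (n + 1 - k), (j.factorial : ℝ)⁻¹ •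
    (((iteratedFDerivWithin ℝ (k + j) f s y).linearDeriv (ψ j z)).comp (L j)) with hD
  refine ⟨D, ?_, ?_⟩
  · have hsum : HasFDerivWithinAt
        (fun x => ∑ j ∈ Finset.range (n + 1 - k), (j.factorial : ℝ)⁻¹ •
          iteratedFDerivWithin ℝ (k + j) f s y (ψ j x))
        (∑ j ∈ Finset.range (n + 1 - k), (j.factorial : ℝ)⁻¹ •
          (((iteratedFDerivWithin ℝ (k + j) f s y).linearDeriv (ψ j z)).comp (L j))) s z :=
      HasFDerivWithinAt.fun_sum fun j _ => ((hAd j).hasFDerivWithinAt).const_smul _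
    exact hT1.sub hsum
  · intro h
    have hDh : D h = D1 h - ∑ j ∈ Finset.range (n + 1 - k), (j.factorial : ℝ)⁻¹ •
        ((iteratedFDerivWithin ℝ (k + j) f s y).linearDeriv (ψ j z)) (L j h) := by
      simp [hD]
    have hfirst : D1 h = iteratedFDerivWithin ℝ (k + 1) f s z (Fin.cons h v) := by
      rw [iteratedFDerivWithin_succ_apply_left]
      simp [hD1]
    have hterm : ∀ j : ℕ,
        ((iteratedFDerivWithin ℝ (k + j) f s y).linearDeriv (ψ j z)) (L j h) =
          ∑ i : Fin j, iteratedFDerivWithin ℝ (k + j) f s y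
            (Function.update (ψ j z) (Fin.natAdd k i) h) := by
      intro j
      rw [ContinuousMultilinearMap.linearDeriv_apply]
      rw [Fin.sum_univ_add]
      have hzero : ∀ i : Fin k, iteratedFDerivWithin ℝ (k + j) f s y
          (Function.update (ψ j z) (Fin.castAdd j i) (L j h (Fin.castAdd j i))) = 0 := by
        intro i
        rw [hL0]
        exact (iteratedFDerivWithin ℝ (k + j) f s y).toMultilinearMap.map_update_zero _ _
      simp only [hzero, Finset.sum_const_zero, zero_add]
      congr 1
      funext i
      rw [hL1]
    have hshift : ∀ j' : ℕ, ∀ i : Fin (j' + 1),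
        iteratedFDerivWithin ℝ (k + (j' + 1)) f s y
          (Function.update (ψ (j' + 1) z) (Fin.natAdd k i) h) =
        iteratedFDerivWithin ℝ (k + 1 + j') f s y
          (Fin.append (Fin.cons h v) fun _ : Fin j' => z - y) := by
      intro j' i
      exact shift_slot hs hf hy v (z - y) h i
    have hcoef : ∀ (j' : ℕ) (X : F),
        (((j' + 1).factorial : ℝ))⁻¹ • ((j' + 1) • X) = ((j'.factorial : ℝ))⁻¹ • X := by
      intro j' X
      rw [show (j' + 1) • X = ((j' + 1 : ℕ) : ℝ) • X from (Nat.cast_smul_eq_nsmul ℝ _ X).symm,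
        smul_smul]
      congr 1
      rw [Nat.factorial_succ]
      have h1 : ((j' + 1 : ℕ) : ℝ) ≠ 0 := by positivity
      have h2 : ((j'.factorial : ℕ) : ℝ) ≠ 0 := Nat.cast_ne_zero.2 (Nat.factorial_ne_zero j')
      push_cast
      field_simp
    have hsum2 : (∑ j ∈ Finset.range (n + 1 - k), (j.factorial : ℝ)⁻¹ •
        ((iteratedFDerivWithin ℝ (k + j) f s y).linearDeriv (ψ j z)) (L j h)) =
        ∑ j' ∈ Finset.range (n - k), (j'.factorial : ℝ)⁻¹ •
          iteratedFDerivWithin ℝ (k + 1 + j') f s y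
            (Fin.append (Fin.cons h v) fun _ : Fin j' => z - y) := by
      have hn : n + 1 - k = (n - k) + 1 := by omega
      rw [hn, Finset.sum_range_succ']
      have h0 : ((0 : ℕ).factorial : ℝ)⁻¹ •
          ((iteratedFDerivWithin ℝ (k + 0) f s y).linearDeriv (ψ 0 z)) (L 0 h) = 0 := by
        rw [hterm 0]
        simp
      rw [h0, add_zero]
      refine Finset.sum_congr rfl fun j' _ => ?_
      rw [hterm (j' + 1)]
      have hconst : (∑ i : Fin (j' + 1), iteratedFDerivWithin ℝ (k + (j' + 1)) f s y
          (Function.update (ψ (j' + 1) z) (Fin.natAdd k i) h)) =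
          (j' + 1) • iteratedFDerivWithin ℝ (k + 1 + j') f s y
            (Fin.append (Fin.cons h v) fun _ : Fin j' => z - y) := by
        rw [Finset.sum_congr rfl fun i _ => hshift j' i]
        simp [Finset.sum_const]
      rw [hconst, hcoef]
    rw [hDh, hfirst, hsum2]
    have hn2 : n + 1 - (k + 1) = n - k := by omega
    rw [auxRem, hn2]

theorem norm_sub_le_of_segment {x y z : E} (hz : z ∈ segment ℝ y x) :
    ‖z - y‖ ≤ ‖x - y‖ := by
  obtain ⟨a, b, ha, hb, hab, rfl⟩ := hz
  have hb1 : b ≤ 1 := by linarith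
  have hkey : a • y + b • x - y = b • (x - y) := by
    rw [show a = 1 - b from by linarith, sub_smul, smul_sub, one_smul]
    abel
  rw [hkey, norm_smul, Real.norm_eq_abs, abs_of_nonneg hb]
  exact mul_le_of_le_one_left (norm_nonneg _) hb1

theorem auxRem_le [CompleteSpace F] (hs : IsOpen s) (hf : ContDiffOn ℝ (⊤ : ℕ∞) f s)
    {t : Set E} (hts : t ⊆ s) (ht : Convex ℝ t) {n : ℕ} {C : ℝ} (hC0 : 0 ≤ C)
    (hC : ∀ z ∈ t, ‖iteratedFDerivWithin ℝ (n + 1) f s z‖ ≤ C) :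
    ∀ (dk k : ℕ), k + dk = n + 1 → ∀ x ∈ t, ∀ y ∈ t, ∀ v : Fin k → E,
      ‖auxRem f s n k x y v‖ ≤ C * ‖x - y‖ ^ dk * ∏ i, ‖v i‖ := by
  intro dk
  induction dk with
  | zero =>
    intro k hk x hx y hy v
    obtain rfl : k = n + 1 := by omega
    have haux : auxRem f s n (n + 1) x y v = iteratedFDerivWithin ℝ (n + 1) f s x v := by
      rw [auxRem]
      simp
    rw [haux, pow_zero, mul_one]
    exact le_trans ((iteratedFDerivWithin ℝ (n + 1) f s x).le_opNorm v)
      (mul_le_mul_of_nonneg_right (hC x hx)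
        (Finset.prod_nonneg fun i _ => norm_nonneg _))
  | succ dk IH =>
    intro k hk x hx y hy v
    have hkn : k ≤ n := by omega
    have hseg : segment ℝ y x ⊆ t := ht.segment_subset hy hx
    have hB0 : 0 ≤ C * ‖x - y‖ ^ dk * ∏ i, ‖v i‖ :=
      mul_nonneg (mul_nonneg hC0 (pow_nonneg (norm_nonneg _) _))
        (Finset.prod_nonneg fun i _ => norm_nonneg _)
    have hex : ∀ z : E, z ∈ segment ℝ y x → ∃ D : E →L[ℝ] F,
        HasFDerivWithinAt (fun x' => auxRem f s n k x' y v) D s z ∧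
          ∀ h : E, D h = auxRem f s n (k + 1) z y (Fin.cons h v) :=
      fun z hz => auxRem_hasFDeriv hs hf hkn (hts hy) v (hts (hseg hz))
    choose! Dmap hDeriv hDval using hex
    have hder : ∀ z ∈ segment ℝ y x,
        HasFDerivWithinAt (fun x' => auxRem f s n k x' y v) (Dmap z) (segment ℝ y x) z :=
      fun z hz => (hDeriv z hz).mono (hseg.trans hts)
    have hbound : ∀ z ∈ segment ℝ y x, ‖Dmap z‖ ≤ C * ‖x - y‖ ^ dk * ∏ i, ‖v i‖ := by
      intro z hz
      refine ContinuousLinearMap.opNorm_le_bound _ hB0 fun h => ?_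
      rw [hDval z hz h]
      have hIH := IH (k + 1) (by omega) z (hseg hz) y hy (Fin.cons h v)
      have hprod : (∏ i, ‖(Fin.cons h v : Fin (k + 1) → E) i‖) = ‖h‖ * ∏ i, ‖v i‖ := by
        rw [Fin.prod_univ_succ]
        simp
      rw [hprod] at hIH
      have hzy : ‖z - y‖ ≤ ‖x - y‖ := norm_sub_le_of_segment hz
      calc ‖auxRem f s n (k + 1) z y (Fin.cons h v)‖
          ≤ C * ‖z - y‖ ^ dk * (‖h‖ * ∏ i, ‖v i‖) := hIH
        _ ≤ C * ‖x - y‖ ^ dk * (‖h‖ * ∏ i, ‖v i‖) := by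
            gcongr
        _ = C * ‖x - y‖ ^ dk * (∏ i, ‖v i‖) * ‖h‖ := by ring
    have hmvt := (convex_segment y x).norm_image_sub_le_of_norm_hasFDerivWithin_le
      hder hbound (left_mem_segment ℝ y x) (right_mem_segment ℝ y x)
    rw [auxRem_self hkn y v, sub_zero] at hmvt
    calc ‖auxRem f s n k x y v‖ ≤ C * ‖x - y‖ ^ dk * (∏ i, ‖v i‖) * ‖x - y‖ := hmvt
      _ = C * ‖x - y‖ ^ (dk + 1) * ∏ i, ‖v i‖ := by ring

end LipHelper


section BallLemmas

open LipHelper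

theorem ballMapInv_ballMap (d : ℕ) (y : EuclideanSpace ℝ (Fin d)) :
    ballMapInv d (ballMap d y) = y := by
  have hS : (0 : ℝ) < 1 + ‖y‖ ^ 2 := by positivity
  have hsq : 0 < Real.sqrt (1 + ‖y‖ ^ 2) := Real.sqrt_pos.2 hS
  have hnorm : ‖ballMap d y‖ ^ 2 = ‖y‖ ^ 2 / (1 + ‖y‖ ^ 2) := by
    rw [ballMap, norm_smul, Real.norm_eq_abs,
      abs_of_nonneg (inv_nonneg.2 (Real.sqrt_nonneg _)), mul_pow, inv_pow,
      Real.sq_sqrt hS.le]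
    ring
  have h1 : 1 - ‖ballMap d y‖ ^ 2 = (1 + ‖y‖ ^ 2)⁻¹ := by
    rw [hnorm]
    field_simp
    ring
  rw [ballMapInv, h1, Real.sqrt_inv, inv_inv, ballMap, smul_smul,
    mul_inv_cancel₀ (ne_of_gt hsq), one_smul]

theorem ballMap_ballMapInv (d : ℕ) {y : EuclideanSpace ℝ (Fin d)}
    (hy : y ∈ Metric.ball (0 : EuclideanSpace ℝ (Fin d)) 1) :
    ballMap d (ballMapInv d y) = y := by
  have hy1 : ‖y‖ < 1 := mem_ball_zero_iff.1 hy
  have hT : (0 : ℝ) < 1 - ‖y‖ ^ 2 := by nlinarith [norm_nonneg y]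
  have hsq : 0 < Real.sqrt (1 - ‖y‖ ^ 2) := Real.sqrt_pos.2 hT
  have hnorm : ‖ballMapInv d y‖ ^ 2 = ‖y‖ ^ 2 / (1 - ‖y‖ ^ 2) := by
    rw [ballMapInv, norm_smul, Real.norm_eq_abs,
      abs_of_nonneg (inv_nonneg.2 (Real.sqrt_nonneg _)), mul_pow, inv_pow,
      Real.sq_sqrt hT.le]
    ring
  have h1 : 1 + ‖ballMapInv d y‖ ^ 2 = (1 - ‖y‖ ^ 2)⁻¹ := by
    rw [hnorm]
    field_simp
    ring
  rw [ballMap, h1, Real.sqrt_inv, inv_inv, ballMapInv, smul_smul,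
    mul_inv_cancel₀ (ne_of_gt hsq), one_smul]

theorem contDiffOn_ballMapInv (d : ℕ) :
    ContDiffOn ℝ (⊤ : ℕ∞) (ballMapInv d) (Metric.ball (0 : EuclideanSpace ℝ (Fin d)) 1) := by
  intro y hy
  have hy1 : ‖y‖ < 1 := mem_ball_zero_iff.1 hy
  have hT : (0 : ℝ) < 1 - ‖y‖ ^ 2 := by nlinarith [norm_nonneg y]
  have h1 : ContDiffAt ℝ (⊤ : ℕ∞)
      (fun z : EuclideanSpace ℝ (Fin d) => 1 - ‖z‖ ^ 2) y :=
    (contDiff_const.sub (contDiff_norm_sq ℝ)).contDiffAt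
  have h2 : ContDiffAt ℝ (⊤ : ℕ∞)
      (fun z : EuclideanSpace ℝ (Fin d) => Real.sqrt (1 - ‖z‖ ^ 2)) y :=
    (Real.contDiffAt_sqrt (ne_of_gt hT)).comp y h1
  have h3 : ContDiffAt ℝ (⊤ : ℕ∞)
      (fun z : EuclideanSpace ℝ (Fin d) => (Real.sqrt (1 - ‖z‖ ^ 2))⁻¹) y :=
    h2.inv (ne_of_gt (Real.sqrt_pos.2 hT))
  exact (h3.smul contDiffAt_id).contDiffWithinAt

theorem exists_bound (d n : ℕ) {δ : ℝ} (hδ0 : 0 < δ) (hδ1 : δ < 1) :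
    ∃ C : ℝ, 0 ≤ C ∧ ∀ k ≤ n + 1, ∀ z ∈ Metric.closedBall (0 : EuclideanSpace ℝ (Fin d)) δ,
      ‖iteratedFDerivWithin ℝ k (ballMapInv d) (Metric.ball 0 1) z‖ ≤ C := by
  have hsub : Metric.closedBall (0 : EuclideanSpace ℝ (Fin d)) δ ⊆ Metric.ball 0 1 :=
    closedBall_subset_ball hδ1
  have hcomp : IsCompact (Metric.closedBall (0 : EuclideanSpace ℝ (Fin d)) δ) :=
    isCompact_closedBall _ _
  have hbd : ∀ k : ℕ, ∃ Ck : ℝ, ∀ z ∈ Metric.closedBall (0 : EuclideanSpace ℝ (Fin d)) δ,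
      ‖iteratedFDerivWithin ℝ k (ballMapInv d) (Metric.ball 0 1) z‖ ≤ Ck := by
    intro k
    have hcont : ContinuousOn (iteratedFDerivWithin ℝ k (ballMapInv d) (Metric.ball 0 1))
        (Metric.ball (0 : EuclideanSpace ℝ (Fin d)) 1) :=
      (contDiffOn_iter isOpen_ball (contDiffOn_ballMapInv d) k 0).continuousOn
    exact hcomp.exists_bound_of_continuousOn (hcont.mono hsub)
  choose Cf hCf using hbd
  refine ⟨∑ k ∈ Finset.range (n + 2), max (Cf k) 0,
    Finset.sum_nonneg fun i _ => le_max_right _ _, ?_⟩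
  intro k hk z hz
  calc ‖iteratedFDerivWithin ℝ k (ballMapInv d) (Metric.ball 0 1) z‖ ≤ Cf k := hCf k z hz
    _ ≤ max (Cf k) 0 := le_max_left _ _
    _ ≤ ∑ k ∈ Finset.range (n + 2), max (Cf k) 0 :=
        Finset.single_le_sum (fun i _ => le_max_right (Cf i) 0)
          (Finset.mem_range.2 (by omega))

end BallLemmas

/-- **The inverse of the ball map and its Lipschitz regularity** (Lemma 2.5, second part).
`y ↦ y/√(1-‖y‖²)` is the inverse of `F(y) = y/√(1+‖y‖²)`, and for every
`δ ∈ (0,1)` and every `γ = n + ε > 0` the collection of `F⁻¹` together with its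
iterated derivatives (taken within the unit ball) is Lip-γ on `B_d(0,δ)`:
all these derivatives are bounded on `B_d(0,δ)` and the `n`-th one is `ε`-Hölder
there. -/
theorem statement4 (d : ℕ) (hd : 0 < d) :
    (∀ y : EuclideanSpace ℝ (Fin d), ballMapInv d (ballMap d y) = y) ∧
    (∀ y ∈ Metric.ball (0 : EuclideanSpace ℝ (Fin d)) 1,
        ballMap d (ballMapInv d y) = y) ∧
    (∀ δ : ℝ, 0 < δ → δ < 1 →
      ∀ (n : ℕ) (ε : ℝ), 0 < ε → ε ≤ 1 →
        ∃ M : ℝ, 0 ≤ M ∧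
          IsLipCollBetween (n + ε) 0 n M
            (fun k x =>
              iteratedFDerivWithin ℝ k (ballMapInv d)
                (Metric.ball (0 : EuclideanSpace ℝ (Fin d)) 1) x)
            (Metric.ball (0 : EuclideanSpace ℝ (Fin d)) δ)) := by
  refine ⟨fun y => ballMapInv_ballMap d y, fun y hy => ballMap_ballMapInv d hy, ?_⟩
  intro δ hδ0 hδ1 n ε hε0 hε1
  obtain ⟨C, hC0, hC⟩ := exists_bound d n hδ0 hδ1
  have hprod0 : ∀ {k : ℕ} (v : Fin k → EuclideanSpace ℝ (Fin d)),
      (0 : ℝ) ≤ ∏ i, ‖v i‖ := fun v => Finset.prod_nonneg fun i _ => norm_nonneg _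
  refine ⟨3 * C, by linarith, ?_, ?_⟩
  · intro k _ hk x hx v
    calc ‖iteratedFDerivWithin ℝ k (ballMapInv d) (Metric.ball 0 1) x v‖
        ≤ ‖iteratedFDerivWithin ℝ k (ballMapInv d) (Metric.ball 0 1) x‖ * ∏ i, ‖v i‖ :=
          ContinuousMultilinearMap.le_opNorm _ v
      _ ≤ C * ∏ i, ‖v i‖ := mul_le_mul_of_nonneg_right
          (hC k (by omega) x (Metric.ball_subset_closedBall hx)) (hprod0 v)
      _ ≤ 3 * C * ∏ i, ‖v i‖ := by nlinarith [hprod0 v]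
  · intro k _ hk x hx y hy v
    have hx1 : ‖x‖ < δ := mem_ball_zero_iff.1 hx
    have hy1 : ‖y‖ < δ := mem_ball_zero_iff.1 hy
    have hxy2 : ‖x - y‖ ≤ 2 := by
      have := norm_sub_le x y
      linarith
    have heq : lipRemainder n
        (fun k x => iteratedFDerivWithin ℝ k (ballMapInv d) (Metric.ball 0 1) x) k x y v =
        LipHelper.auxRem (ballMapInv d) (Metric.ball 0 1) n k x y v := by
      rw [lipRemainder, LipHelper.auxRem, show n - k + 1 = n + 1 - k from by omega]
    rw [heq]
    have hcore := LipHelper.auxRem_le isOpen_ball (contDiffOn_ballMapInv d)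
      (Metric.ball_subset_ball hδ1.le) (convex_ball _ _) hC0
      (fun z hz => hC (n + 1) le_rfl z (Metric.ball_subset_closedBall hz))
      (n + 1 - k) k (by omega) x hx y hy v
    rcases eq_or_lt_of_le (norm_nonneg (x - y)) with h0 | hrpos
    · have hr0 : ‖x - y‖ = 0 := h0.symm
      have hz1 : ‖x - y‖ ^ (n + 1 - k) = 0 := by
        rw [hr0]
        exact zero_pow (by omega)
      rw [hz1, mul_zero, zero_mul] at hcore
      have hz2 : ‖x - y‖ ^ ((n : ℝ) + ε - k) = 0 := by
        rw [hr0]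
        refine Real.zero_rpow (ne_of_gt ?_)
        have : (k : ℝ) ≤ n := Nat.cast_le.2 hk
        linarith
      have : 3 * C * ‖x - y‖ ^ ((n : ℝ) + ε - k) * ∏ i, ‖v i‖ = 0 := by
        rw [hz2]
        ring
      rw [this]
      exact hcore
    · have key : ‖x - y‖ ^ (n + 1 - k) =
          ‖x - y‖ ^ ((n : ℝ) + ε - k) * ‖x - y‖ ^ (1 - ε) := by
        rw [← Real.rpow_natCast ‖x - y‖ (n + 1 - k), ← Real.rpow_add hrpos]
        congr 1
        have hk1 : k ≤ n + 1 := by omega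
        push_cast [Nat.cast_sub hk1]
        ring
      have h1e : ‖x - y‖ ^ (1 - ε) ≤ 2 := by
        have h2a : ‖x - y‖ ^ (1 - ε) ≤ (2 : ℝ) ^ (1 - ε) :=
          Real.rpow_le_rpow (le_of_lt hrpos) hxy2 (by linarith)
        have h2b : (2 : ℝ) ^ (1 - ε) ≤ (2 : ℝ) ^ (1 : ℝ) :=
          Real.rpow_le_rpow_of_exponent_le one_le_two (by linarith)
        rw [Real.rpow_one] at h2b
        linarith
      have hrpow0 : 0 ≤ ‖x - y‖ ^ ((n : ℝ) + ε - k) :=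
        Real.rpow_nonneg (le_of_lt hrpos) _
      have hrpow1 : 0 ≤ ‖x - y‖ ^ (1 - ε) := Real.rpow_nonneg (le_of_lt hrpos) _
      calc ‖LipHelper.auxRem (ballMapInv d) (Metric.ball 0 1) n k x y v‖
          ≤ C * (‖x - y‖ ^ ((n : ℝ) + ε - k) * ‖x - y‖ ^ (1 - ε)) * ∏ i, ‖v i‖ := by
            rw [← key]
            exact hcore
        _ ≤ 3 * C * ‖x - y‖ ^ ((n : ℝ) + ε - k) * ∏ i, ‖v i‖ := by
            nlinarith [mul_le_mul_of_nonneg_left h1e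
              (mul_nonneg (mul_nonneg hC0 hrpow0) (hprod0 v)), hprod0 v,
              mul_nonneg (mul_nonneg hC0 hrpow0) (hprod0 v)]

end
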